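/- Let X be a non-negative absolutely continuous random variable with weighted residual entropy H^w(t), weighted past entropy H̄^w(t), conditional mean δ(t) = E(X | X > t) and mean past lifetime μ(t) = E(X | X ≤ t). Then for all a > 0 and t > 0: H^w_{aX}(t) = a H^w(t/a) + δ(t/a) · a log a, and H̄^w_{aX}(t) = a H̄^w(t/a) + μ(t/a) · a log a. -/

import Mathlib

open MeasureTheory

/-- Survival function `F̄(t) = ∫_t^∞ f(x) dx` of a density `f`. -/
noncomputable def survFn (f : ℝ → ℝ) (t : ℝ) : ℝ := ∫ x in Set.Ioi t, f x

/-- Distribution function `F(t) = ∫_{-∞}^t f(x) dx` of a density `f`. -/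
noncomputable def distFn (f : ℝ → ℝ) (t : ℝ) : ℝ := ∫ x in Set.Iic t, f x

/-- Residual entropy `H(t) = -∫_t^∞ (f(x)/F̄(t)) log (f(x)/F̄(t)) dx`. -/
noncomputable def resEnt (f : ℝ → ℝ) (t : ℝ) : ℝ :=
  -∫ x in Set.Ioi t, f x / survFn f t * Real.log (f x / survFn f t)

/-- Weighted residual entropy `H^w(t) = -∫_t^∞ x (f(x)/F̄(t)) log (f(x)/F̄(t)) dx`. -/
noncomputable def wResEnt (f : ℝ → ℝ) (t : ℝ) : ℝ :=
  -∫ x in Set.Ioi t, x * (f x / survFn f t) * Real.log (f x / survFn f t)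

/-- Past entropy `H̄(t) = -∫_0^t (f(x)/F(t)) log (f(x)/F(t)) dx`. -/
noncomputable def pastEnt (f : ℝ → ℝ) (t : ℝ) : ℝ :=
  -∫ x in Set.Ioc 0 t, f x / distFn f t * Real.log (f x / distFn f t)

/-- Weighted past entropy `H̄^w(t) = -∫_0^t x (f(x)/F(t)) log (f(x)/F(t)) dx`. -/
noncomputable def wPastEnt (f : ℝ → ℝ) (t : ℝ) : ℝ :=
  -∫ x in Set.Ioc 0 t, x * (f x / distFn f t) * Real.log (f x / distFn f t)

/-- The support `S = (0, ν)` (with `ν ≤ +∞`) as a subset of `ℝ`. -/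
def supS (ν : EReal) : Set ℝ := {x : ℝ | 0 < x ∧ (x : EReal) < ν}

lemma my_comp_Iic (g : ℝ → ℝ) (c : ℝ) {b : ℝ} (hb : 0 < b) :
    (∫ x in Set.Iic c, g (b * x)) = b⁻¹ • ∫ x in Set.Iic (b * c), g x := by
  rw [← integral_indicator measurableSet_Iic, ← integral_indicator measurableSet_Iic,
    ← abs_of_pos (inv_pos.mpr hb), ← Measure.integral_comp_mul_left]
  congr 1
  ext1 x
  rw [← Set.indicator_comp_right, Set.preimage_const_mul_Iic₀ _ hb,
    mul_div_cancel_left₀ _ hb.ne']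
  rfl

lemma my_comp_Ioc (g : ℝ → ℝ) (c d : ℝ) {b : ℝ} (hb : 0 < b) :
    (∫ x in Set.Ioc c d, g (b * x)) = b⁻¹ • ∫ x in Set.Ioc (b * c) (b * d), g x := by
  rw [← integral_indicator measurableSet_Ioc, ← integral_indicator measurableSet_Ioc,
    ← abs_of_pos (inv_pos.mpr hb), ← Measure.integral_comp_mul_left]
  congr 1
  ext1 x
  rw [← Set.indicator_comp_right, Set.preimage_const_mul_Ioc₀ _ _ hb,
    mul_div_cancel_left₀ _ hb.ne', mul_div_cancel_left₀ _ hb.ne']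
  rfl

lemma intA (f : ℝ → ℝ) {S : ℝ} (hS : 0 < S)
    (hf_nonneg : ∀ x, 0 ≤ f x)
    (hmean : Integrable (fun x => x * f x))
    (hwent : Integrable (fun x => x * f x * Real.log (f x))) :
    Integrable (fun x => x * (f x / S) * Real.log (f x / S)) := by
  have h := (hwent.const_mul S⁻¹).sub (hmean.const_mul (S⁻¹ * Real.log S))
  refine h.congr (Filter.Eventually.of_forall fun x => ?_)
  rcases eq_or_lt_of_le (hf_nonneg x) with h0 | h0
  · simp [← h0]
  · simp only [Pi.sub_apply]
    rw [Real.log_div h0.ne' hS.ne']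
    field_simp

lemma part_lemma (f : ℝ → ℝ) {a S : ℝ} (ha : 0 < a) (hS : 0 < S)
    (hf_nonneg : ∀ x, 0 ≤ f x)
    (hmean : Integrable (fun x => x * f x))
    (hwent : Integrable (fun x => x * f x * Real.log (f x)))
    (s : Set ℝ) (hs : MeasurableSet s) :
    ∫ x in s, (a * x) * ((1 / a * f (a * x / a)) / S)
        * Real.log ((1 / a * f (a * x / a)) / S)
      = (∫ x in s, x * (f x / S) * Real.log (f x / S))
        - Real.log a * ((∫ x in s, x * f x) / S) := by
  have key : ∀ x : ℝ, (a * x) * ((1 / a * f (a * x / a)) / S)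
        * Real.log ((1 / a * f (a * x / a)) / S)
      = x * (f x / S) * Real.log (f x / S) - Real.log a * (x * f x / S) := by
    intro x
    rw [mul_div_cancel_left₀ _ ha.ne']
    rcases eq_or_lt_of_le (hf_nonneg x) with h0 | h0
    · simp [← h0]
    · have h1 : (1 / a * f x) / S = (f x / S) / a := by
        rw [mul_comm (1/a) (f x), mul_one_div, div_div, div_div, mul_comm a S]
      rw [h1, Real.log_div (by positivity) ha.ne', Real.log_div h0.ne' hS.ne']
      field_simp
  rw [setIntegral_congr_fun hs (fun x _ => key x)]
  have hA := (intA f hS hf_nonneg hmean hwent).integrableOn (s := s)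
  have hB : IntegrableOn (fun x => Real.log a * (x * f x / S)) s := by
    refine ((hmean.const_mul (Real.log a * S⁻¹)).congr
      (Filter.Eventually.of_forall fun x => by field_simp)).integrableOn
  rw [integral_sub hA hB, integral_const_mul]
  congr 1
  rw [← integral_div]

/-- Let `X` be a non-negative absolutely continuous random variable
with density `f`, weighted residual entropy `H^w`, weighted past entropy `H̄^w`,
conditional mean `δ(t) = E(X | X > t) = (1/F̄(t)) ∫_t^∞ x f(x) dx` and mean past
lifetime `μ(t) = E(X | X ≤ t) = (1/F(t)) ∫_0^t x f(x) dx`. For `a > 0`, the random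
variable `aX` has density `x ↦ (1/a) f(x/a)`, and for all `t > 0`:
`H^w_{aX}(t) = a H^w(t/a) + δ(t/a) a log a` and
`H̄^w_{aX}(t) = a H̄^w(t/a) + μ(t/a) a log a`. -/
theorem wEnt_scale (f : ℝ → ℝ) (a t : ℝ) (ha : 0 < a) (ht : 0 < t)
    (hf_nonneg : ∀ x, 0 ≤ f x) (hf_supp : ∀ x, x < 0 → f x = 0)
    (hf_dens : ∫ x, f x = 1)
    (hmean : Integrable (fun x => x * f x))
    (hent : Integrable (fun x => f x * Real.log (f x)))
    (hwent : Integrable (fun x => x * f x * Real.log (f x)))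
    (hsurv : 0 < survFn f (t / a)) (hdist : 0 < distFn f (t / a)) :
    wResEnt (fun x => 1 / a * f (x / a)) t
        = a * wResEnt f (t / a)
          + (∫ x in Set.Ioi (t / a), x * f x) / survFn f (t / a) * (a * Real.log a)
    ∧ wPastEnt (fun x => 1 / a * f (x / a)) t
        = a * wPastEnt f (t / a)
          + (∫ x in Set.Ioc 0 (t / a), x * f x) / distFn f (t / a) * (a * Real.log a) := by
  have hIoi : ∀ φ : ℝ → ℝ, (∫ x in Set.Ioi t, φ x) = a * ∫ x in Set.Ioi (t/a), φ (a*x) := by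
    intro φ
    rw [integral_comp_mul_left_Ioi φ (t/a) ha, mul_div_cancel₀ _ ha.ne',
      smul_eq_mul, ← mul_assoc, mul_inv_cancel₀ ha.ne', one_mul]
  have hIoc : ∀ φ : ℝ → ℝ, (∫ x in Set.Ioc 0 t, φ x) = a * ∫ x in Set.Ioc 0 (t/a), φ (a*x) := by
    intro φ
    rw [my_comp_Ioc φ 0 (t/a) ha, mul_zero, mul_div_cancel₀ _ ha.ne',
      smul_eq_mul, ← mul_assoc, mul_inv_cancel₀ ha.ne', one_mul]
  have hSg : survFn (fun x => 1/a * f (x/a)) t = survFn f (t/a) := by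
    unfold survFn
    rw [hIoi (fun x => 1/a * f (x/a))]
    simp only [mul_div_cancel_left₀ _ ha.ne']
    rw [integral_const_mul]
    field_simp
  have hDg : distFn (fun x => 1/a * f (x/a)) t = distFn f (t/a) := by
    unfold distFn
    have hIic : ∀ φ : ℝ → ℝ, (∫ x in Set.Iic t, φ x) = a * ∫ x in Set.Iic (t/a), φ (a*x) := by
      intro φ
      rw [my_comp_Iic φ (t/a) ha, mul_div_cancel₀ _ ha.ne',
        smul_eq_mul, ← mul_assoc, mul_inv_cancel₀ ha.ne', one_mul]
    rw [hIic (fun x => 1/a * f (x/a))]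
    simp only [mul_div_cancel_left₀ _ ha.ne']
    rw [integral_const_mul]
    field_simp
  constructor
  · simp only [wResEnt, hSg]
    rw [hIoi (fun x => x * (1/a * f (x/a) / survFn f (t/a))
      * Real.log (1/a * f (x/a) / survFn f (t/a)))]
    rw [part_lemma f ha hsurv hf_nonneg hmean hwent _ measurableSet_Ioi]
    ring
  · simp only [wPastEnt, hDg]
    rw [hIoc (fun x => x * (1/a * f (x/a) / distFn f (t/a))
      * Real.log (1/a * f (x/a) / distFn f (t/a)))]
    rw [part_lemma f ha hdist hf_nonneg hmean hwent _ measurableSet_Ioc]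
    ring
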